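/- Let t be a binary tree with n leaves and set h(n) := (1/2)·log₂(n/2). Then there exists a finite set A of internal vertices of t with |A| ≥ h(n) such that for every rooted subtree z of t with m(z) ≤ h(n), every element of A is an internal vertex of z (under the canonical identification of positions in z with positions in t). -/
import Mathlib


/-- Finite ordered rooted binary trees. -/
inductive BTree where
  | leaf : BTree
  | node : BTree → BTree → BTree
deriving DecidableEq

/-- Positions (vertices) in a binary tree: `false` = go to the left child,
`true` = go to the right child. -/
abbrev Pos := List Bool

/-- The subtree of `t` at position `p`, if `p` stays inside `t`. -/
def BTree.subtreeAt : BTree → Pos → Option BTree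
  | t, [] => some t
  | .leaf, _ :: _ => none
  | .node l r, b :: p => (if b then r else l).subtreeAt p

/-- `p` is an internal (trivalent) vertex of `t`. -/
def IsInternal (t : BTree) (p : Pos) : Prop :=
  ∃ l r, t.subtreeAt p = some (BTree.node l r)

/-- The number of leaves of a binary tree. -/
def BTree.leaves : BTree → ℕ
  | .leaf => 1
  | .node l r => l.leaves + r.leaves

/-- `z` is a rooted subtree of `t`: `leaf` is a rooted subtree of every tree, and
`node z₁ z₂` is a rooted subtree of `node l r` iff `z₁` is a rooted subtree of `l` and
`z₂` is a rooted subtree of `r`. -/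
def IsRootedSubtree : BTree → BTree → Prop
  | BTree.leaf, _ => True
  | BTree.node _ _, BTree.leaf => False
  | BTree.node z₁ z₂, BTree.node l r => IsRootedSubtree z₁ l ∧ IsRootedSubtree z₂ r

/-- `bfun t z` is the number of leaves of the rooted subtree `z` that are internal
vertices of `t`. -/
def bfun : BTree → BTree → ℕ
  | BTree.leaf, BTree.leaf => 0
  | BTree.node _ _, BTree.leaf => 1
  | BTree.leaf, BTree.node _ _ => 0
  | BTree.node l r, BTree.node z₁ z₂ => bfun l z₁ + bfun r z₂

/-- `mz t z = (n − 1) − (leaves z − 1) − b(t,z)` for a rooted subtree `z` of a tree `t`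
with `n` leaves. -/
def mz (t z : BTree) : ℕ :=
  (t.leaves - 1) - (z.leaves - 1) - bfun t z

namespace Stmt15Aux

lemma leaves_pos (t : BTree) : 1 ≤ t.leaves := by
  induction t with
  | leaf => simp [BTree.leaves]
  | node l r ih1 ih2 => simp [BTree.leaves]; omega

lemma subtree_le (p : Pos) : ∀ (t s : BTree), t.subtreeAt p = some s → s.leaves ≤ t.leaves := by
  induction p with
  | nil =>
    intro t s h
    simp [BTree.subtreeAt] at h
    subst h; exact le_rfl
  | cons b p ih =>
    intro t s h
    cases t with
    | leaf => simp [BTree.subtreeAt] at h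
    | node l r =>
      have h1 := leaves_pos l
      have h2 := leaves_pos r
      cases b
      · simp [BTree.subtreeAt] at h
        have := ih l s h
        simp [BTree.leaves]; omega
      · simp [BTree.subtreeAt] at h
        have := ih r s h
        simp [BTree.leaves]; omega

lemma rooted_le : ∀ (z t : BTree), IsRootedSubtree z t → z.leaves + bfun t z ≤ t.leaves
  | .leaf, .leaf, _ => by simp [BTree.leaves, bfun]
  | .leaf, .node l r, _ => by
      have := leaves_pos l; have := leaves_pos r
      simp [BTree.leaves, bfun]; omega
  | .node z1 z2, .leaf, h => h.elim
  | .node z1 z2, .node l r, h => by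
      have h1 := rooted_le z1 l h.1
      have h2 := rooted_le z2 r h.2
      simp [BTree.leaves, bfun]; omega

lemma key (p : Pos) : ∀ (z t s : BTree), IsRootedSubtree z t → t.subtreeAt p = some s →
    ¬ IsInternal z p → s.leaves ≤ mz t z + 2 := by
  induction p with
  | nil =>
    intro z t s hzt hs hni
    simp [BTree.subtreeAt] at hs
    subst hs
    cases z with
    | node z1 z2 => exact absurd ⟨z1, z2, rfl⟩ hni
    | leaf =>
      cases t with
      | leaf => simp [mz, BTree.leaves]
      | node l r =>
        have := leaves_pos l; have := leaves_pos r
        simp [mz, bfun, BTree.leaves]; omega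
  | cons b p ih =>
    intro z t s hzt hs hni
    cases t with
    | leaf => simp [BTree.subtreeAt] at hs
    | node l r =>
      have hl := leaves_pos l
      have hr := leaves_pos r
      cases z with
      | leaf =>
        have hsl : s.leaves ≤ l.leaves + r.leaves := by
          cases b
          · simp [BTree.subtreeAt] at hs
            have := subtree_le p l s hs; omega
          · simp [BTree.subtreeAt] at hs
            have := subtree_le p r s hs; omega
        simp [mz, bfun, BTree.leaves]; omega
      | node z1 z2 =>
        have h1 := rooted_le z1 l hzt.1
        have h2 := rooted_le z2 r hzt.2
        have hz1 := leaves_pos z1; have hz2 := leaves_pos z2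
        cases b
        · have hrec : s.leaves ≤ mz l z1 + 2 := by
            apply ih z1 l s hzt.1
            · simpa [BTree.subtreeAt] using hs
            · rintro ⟨a, c, hac⟩
              exact hni ⟨a, c, by simpa [BTree.subtreeAt] using hac⟩
          simp only [mz, bfun, BTree.leaves] at *
          omega
        · have hrec : s.leaves ≤ mz r z2 + 2 := by
            apply ih z2 r s hzt.2
            · simpa [BTree.subtreeAt] using hs
            · rintro ⟨a, c, hac⟩
              exact hni ⟨a, c, by simpa [BTree.subtreeAt] using hac⟩
          simp only [mz, bfun, BTree.leaves] at *
          omega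

def hvy : BTree → ℕ → Pos
  | _, 0 => []
  | .leaf, k+1 => false :: hvy .leaf k
  | .node l r, k+1 => if r.leaves ≤ l.leaves then false :: hvy l k else true :: hvy r k

lemma hvy_length : ∀ (t : BTree) (k : ℕ), (hvy t k).length = k := by
  intro t k
  induction k generalizing t with
  | zero => cases t <;> simp [hvy]
  | succ k ih =>
    cases t with
    | leaf => simp [hvy, ih]
    | node l r =>
      by_cases h : r.leaves ≤ l.leaves <;> simp [hvy, h, ih]

lemma heavy : ∀ (k : ℕ) (t : BTree), 2^k < t.leaves →
    ∃ a b, t.subtreeAt (hvy t k) = some (.node a b) ∧ t.leaves ≤ 2^k * (BTree.node a b).leaves := by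
  intro k
  induction k with
  | zero =>
    intro t ht
    cases t with
    | leaf => simp [BTree.leaves] at ht
    | node a b =>
      refine ⟨a, b, by simp [hvy, BTree.subtreeAt], by omega⟩
  | succ k ih =>
    intro t ht
    cases t with
    | leaf => simp [BTree.leaves] at ht
    | node l r =>
      have hl := leaves_pos l
      have hr := leaves_pos r
      simp only [BTree.leaves] at ht
      rw [pow_succ] at ht
      by_cases hlr : r.leaves ≤ l.leaves
      · have h2 : 2^k < l.leaves := by omega
        obtain ⟨a, b, h1, h2'⟩ := ih l h2
        refine ⟨a, b, ?_, ?_⟩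
        · simp [hvy, hlr, BTree.subtreeAt, h1]
        · have : 2 * l.leaves ≤ 2 * (2^k * (BTree.node a b).leaves) := by omega
          calc (BTree.node l r).leaves = l.leaves + r.leaves := rfl
          _ ≤ 2 * l.leaves := by omega
          _ ≤ 2 * (2^k * (BTree.node a b).leaves) := this
          _ = 2^(k+1) * (BTree.node a b).leaves := by ring
      · have h2 : 2^k < r.leaves := by omega
        obtain ⟨a, b, h1, h2'⟩ := ih r h2
        refine ⟨a, b, ?_, ?_⟩
        · simp [hvy, hlr, BTree.subtreeAt, h1]
        · have : 2 * r.leaves ≤ 2 * (2^k * (BTree.node a b).leaves) := by omega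
          calc (BTree.node l r).leaves = l.leaves + r.leaves := rfl
          _ ≤ 2 * r.leaves := by omega
          _ ≤ 2 * (2^k * (BTree.node a b).leaves) := this
          _ = 2^(k+1) * (BTree.node a b).leaves := by ring

lemma analytic (N : ℕ) (hN : 3 ≤ N) :
    (1/2) * Real.logb 2 ((N:ℝ)/2) + 2 < 2 * Real.sqrt ((N:ℝ)/2) := by
  have hN2 : (1:ℝ) < (N:ℝ)/2 := by
    have : (3:ℝ) ≤ N := by exact_mod_cast hN
    linarith
  set s := Real.sqrt ((N:ℝ)/2) with hs
  have hs1 : 1 < s := by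
    rw [hs, show (1:ℝ) = Real.sqrt 1 by simp]
    exact Real.sqrt_lt_sqrt (by norm_num) hN2
  have hsq : s^2 = (N:ℝ)/2 := Real.sq_sqrt (by linarith)
  have hlog : Real.log ((N:ℝ)/2) = 2 * Real.log s := by
    rw [← hsq, Real.log_pow]; push_cast; ring
  have hle : Real.log s ≤ s - 1 := Real.log_le_sub_one_of_pos (by linarith)
  have hlog2 : (0.6931471803 : ℝ) < Real.log 2 := Real.log_two_gt_d9
  have hlogpos : (0:ℝ) < Real.log 2 := by linarith
  have key2 : Real.log s + 2 * Real.log 2 < 2 * s * Real.log 2 := by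
    nlinarith [mul_pos (sub_pos.mpr hs1) (show (0:ℝ) < 2 * Real.log 2 - 1 by linarith)]
  rw [Real.logb, hlog]
  calc 1/2 * (2 * Real.log s / Real.log 2) + 2
      = (Real.log s + 2 * Real.log 2) / Real.log 2 := by field_simp
    _ < (2 * s * Real.log 2) / Real.log 2 := by gcongr
    _ = 2 * s := by field_simp

end Stmt15Aux

/-- Let `t` be a binary tree with `n` leaves and `h(n) = (1/2)·log₂(n/2)`.
Then there is a finite set `A` of internal vertices of `t` with `|A| ≥ h(n)` such that
for every rooted subtree `z` of `t` with `m(z) ≤ h(n)`, every element of `A` is an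
internal vertex of `z` (positions in `z` being canonically identified with positions
in `t`). -/
theorem stmt15 (t : BTree) (n : ℕ) (hn : t.leaves = n) :
    ∃ A : Finset Pos, (∀ p ∈ A, IsInternal t p) ∧
      (1 / 2) * Real.logb 2 ((n : ℝ) / 2) ≤ (A.card : ℝ) ∧
      ∀ z : BTree, IsRootedSubtree z t →
        (mz t z : ℝ) ≤ (1 / 2) * Real.logb 2 ((n : ℝ) / 2) →
        ∀ p ∈ A, IsInternal z p := by
  subst hn
  by_cases hle : t.leaves ≤ 2
  · refine ⟨∅, by simp, ?_, by simp⟩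
    simp only [Finset.card_empty, Nat.cast_zero]
    have h0 : Real.logb 2 ((t.leaves : ℝ)/2) ≤ 0 := by
      apply Real.logb_nonpos (by norm_num) (by positivity)
      have : (t.leaves : ℝ) ≤ 2 := by exact_mod_cast hle
      linarith
    linarith
  · push_neg at hle
    have hN : 3 ≤ t.leaves := hle
    set N : ℕ := t.leaves with hNdef
    set h : ℝ := (1/2) * Real.logb 2 ((N:ℝ)/2) with hdef
    have hN2 : (1:ℝ) < (N:ℝ)/2 := by
      have : (3:ℝ) ≤ (N:ℝ) := by exact_mod_cast hN
      linarith
    have hposh : 0 < h := by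
      have := Real.logb_pos (by norm_num : (1:ℝ) < 2) hN2
      rw [hdef]; linarith
    set K := ⌈h⌉₊ with hKdef
    have hK0 : 0 < K := Nat.ceil_pos.mpr hposh
    have hKh : (K:ℝ) < h + 1 := Nat.ceil_lt_add_one hposh.le
    set s := Real.sqrt ((N:ℝ)/2) with hsdef
    have hs2 : h + 2 < 2 * s := Stmt15Aux.analytic N hN
    have hsq : s^2 = (N:ℝ)/2 := Real.sq_sqrt (by linarith)
    have hs1 : 1 < s := by nlinarith
    have h2h : (2:ℝ) ^ h = s := by
      rw [hdef, mul_comm, Real.rpow_mul (by norm_num : (0:ℝ) ≤ 2),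
        Real.rpow_logb (by norm_num) (by norm_num) (by linarith),
        hsdef, Real.sqrt_eq_rpow]
    have hmain : ∀ k < K, ∃ a b,
        t.subtreeAt (Stmt15Aux.hvy t k) = some (.node a b) ∧
        h + 2 < ((BTree.node a b).leaves : ℝ) := by
      intro k hk
      have hkh : (k:ℝ) < h := by
        have : ((k:ℕ):ℝ) + 1 ≤ (K:ℝ) := by exact_mod_cast hk
        linarith
      have h2k : (2:ℝ)^k < s := by
        calc (2:ℝ)^k = (2:ℝ)^((k:ℕ):ℝ) := (Real.rpow_natCast 2 k).symm
          _ < (2:ℝ)^h := by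
              exact (Real.rpow_lt_rpow_left_iff (by norm_num : (1:ℝ) < 2)).mpr hkh
          _ = s := h2h
      have hkN : 2^k < N := by
        have hsN : s < (N:ℝ) := by nlinarith
        have : (2:ℝ)^k < (N:ℝ) := lt_trans h2k hsN
        exact_mod_cast this
      obtain ⟨a, b, hab, hle2⟩ := Stmt15Aux.heavy k t hkN
      refine ⟨a, b, hab, ?_⟩
      have hcast : (N:ℝ) ≤ (2:ℝ)^k * ((BTree.node a b).leaves : ℝ) := by
        exact_mod_cast hle2
      have hpk : (0:ℝ) < (2:ℝ)^k := by positivity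
      nlinarith
    refine ⟨(Finset.range K).image (fun k => Stmt15Aux.hvy t k), ?_, ?_, ?_⟩
    · intro p hp
      simp only [Finset.mem_image, Finset.mem_range] at hp
      obtain ⟨k, hk, rfl⟩ := hp
      obtain ⟨a, b, hab, _⟩ := hmain k hk
      exact ⟨a, b, hab⟩
    · have hcard : ((Finset.range K).image (fun k => Stmt15Aux.hvy t k)).card = K := by
        rw [Finset.card_image_of_injOn, Finset.card_range]
        intro x _ y _ hxy
        have := congrArg List.length hxy
        simpa [Stmt15Aux.hvy_length] using this
      rw [hcard]
      exact Nat.le_ceil h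
    · intro z hz hmz p hp
      simp only [Finset.mem_image, Finset.mem_range] at hp
      obtain ⟨k, hk, rfl⟩ := hp
      by_contra hni
      obtain ⟨a, b, hab, hS⟩ := hmain k hk
      have hkey := Stmt15Aux.key (Stmt15Aux.hvy t k) z t (.node a b) hz hab hni
      have : ((BTree.node a b).leaves : ℝ) ≤ (mz t z : ℝ) + 2 := by exact_mod_cast hkey
      linarith
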